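/- arXiv:2101.03355 — 3 statements merged into one kernel-verified Lean document; each statement's English description precedes it below -/
import Mathlib

section
/- Let X₁, X₂ ∈ ℂ^{n×n} be nonzero Hermitian positive semidefinite matrices. Then tr(X₁X₂) = tr(X₁)·tr(X₂) holds if and only if there exist a nonzero vector x ∈ ℂⁿ and a real scalar α > 0 such that X₁ = x xᴴ and X₂ = α·x xᴴ (equivalently: both matrices have rank one and X₁ = α'·X₂ for some positive real α'). -/
open Matrix ComplexOrder

private lemma trace_CTmul_eq {k : ℕ} (B : Matrix (Fin k) (Fin k) ℂ) :
    (Bᴴ * B).trace = ((∑ j, ∑ i, Complex.normSq (B i j) : ℝ) : ℂ) := by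
  simp [Matrix.trace, Matrix.mul_apply, Matrix.diag, conjTranspose_apply,
    Complex.normSq_eq_conj_mul_self]

private lemma eq_zero_of_trace_CTmul {k : ℕ} (B : Matrix (Fin k) (Fin k) ℂ)
    (h : (Bᴴ * B).trace = 0) : B = 0 := by
  rw [trace_CTmul_eq] at h
  norm_cast at h
  have h' : ∀ j ∈ Finset.univ, ∀ i ∈ Finset.univ, Complex.normSq (B (i : Fin k) (j : Fin k)) = 0 := by
    have := (Finset.sum_eq_zero_iff_of_nonneg (fun j _ => Finset.sum_nonneg
      (fun i _ => Complex.normSq_nonneg _))).mp h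
    intro j hj i hi
    exact (Finset.sum_eq_zero_iff_of_nonneg (fun i _ => Complex.normSq_nonneg _)).mp (this j hj) i hi
  ext i j
  simpa using Complex.normSq_eq_zero.mp (h' j (Finset.mem_univ j) i (Finset.mem_univ i))

private lemma trace_pos_of_psd_ne_zero {k : ℕ} {A : Matrix (Fin k) (Fin k) ℂ}
    (hA : A.PosSemidef) (h0 : A ≠ 0) : ∃ a : ℝ, 0 < a ∧ A.trace = (a : ℂ) := by
  obtain ⟨B, rfl⟩ : ∃ B : Matrix (Fin k) (Fin k) ℂ, A = Bᴴ * B := open scoped MatrixOrder in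
    ⟨CFC.sqrt A, (CFC.sqrt_mul_sqrt_self A hA.nonneg).symm.trans
      (congrArg (· * CFC.sqrt A) (CFC.sqrt_nonneg A).posSemidef.1.eq.symm)⟩
  refine ⟨∑ j, ∑ i, Complex.normSq (B i j), ?_, trace_CTmul_eq B⟩
  rcases lt_or_eq_of_le (Finset.sum_nonneg fun j _ => Finset.sum_nonneg fun i _ =>
    Complex.normSq_nonneg _) with h | h
  · exact h
  · exfalso
    apply h0
    have : (Bᴴ * B).trace = 0 := by rw [trace_CTmul_eq, ← h]; norm_num
    rw [eq_zero_of_trace_CTmul B this]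
    simp

private lemma mul_eq_zero_of_trace_mul_eq_zero {k : ℕ} {A B : Matrix (Fin k) (Fin k) ℂ}
    (hA : A.PosSemidef) (hB : B.PosSemidef) (h : (A * B).trace = 0) : A * B = 0 := by
  obtain ⟨SA, hSAp, hSAm⟩ : ∃ S : Matrix (Fin k) (Fin k) ℂ, Sᴴ = S ∧ S * S = A :=
    open scoped MatrixOrder in
      ⟨CFC.sqrt A, (CFC.sqrt_nonneg A).posSemidef.1, CFC.sqrt_mul_sqrt_self A hA.nonneg⟩
  obtain ⟨SB, hSBp, hSBm⟩ : ∃ S : Matrix (Fin k) (Fin k) ℂ, Sᴴ = S ∧ S * S = B :=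
    open scoped MatrixOrder in
      ⟨CFC.sqrt B, (CFC.sqrt_nonneg B).posSemidef.1, CFC.sqrt_mul_sqrt_self B hB.nonneg⟩
  have hCh : (SB * SA)ᴴ = SA * SB := by rw [conjTranspose_mul, hSAp, hSBp]
  have key : ((SB * SA)ᴴ * (SB * SA)).trace = (A * B).trace := by
    rw [hCh, show SA * SB * (SB * SA) = SA * (SB * SB) * SA by simp only [mul_assoc],
      trace_mul_cycle]
    congr 1
    rw [← hSAm, ← hSBm]
  have hC0 : SB * SA = 0 := eq_zero_of_trace_CTmul _ (by rw [key, h])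
  have hCT0 : SA * SB = 0 := by rw [← hCh, hC0]; simp
  calc A * B = SA * (SA * SB) * SB := by rw [← hSAm, ← hSBm]; simp only [mul_assoc]
    _ = 0 := by rw [hCT0]; simp

private lemma psd_decomp {k : ℕ} {A : Matrix (Fin k) (Fin k) ℂ} (hA : A.PosSemidef) :
    ∃ (U : Matrix (Fin k) (Fin k) ℂ) (d : Fin k → ℝ),
      U * star U = 1 ∧ star U * U = 1 ∧ (∀ i, 0 ≤ d i) ∧
      A = U * diagonal (fun i => (d i : ℂ)) * star U := by
  have hH := hA.1
  exact ⟨(IsHermitian.eigenvectorUnitary hH : Matrix (Fin k) (Fin k) ℂ), hH.eigenvalues,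
    (Matrix.mem_unitaryGroup_iff).mp (IsHermitian.eigenvectorUnitary hH).2,
    (Matrix.mem_unitaryGroup_iff').mp (IsHermitian.eigenvectorUnitary hH).2,
    hA.eigenvalues_nonneg, hH.spectral_theorem⟩

private lemma trace_decomp {k : ℕ} (U : Matrix (Fin k) (Fin k) ℂ) (d : Fin k → ℝ)
    (hU1' : star U * U = 1) :
    (U * diagonal (fun i => (d i : ℂ)) * star U).trace = ((∑ i, d i : ℝ) : ℂ) := by
  rw [trace_mul_cycle, hU1', one_mul, trace_diagonal]
  push_cast
  rfl

private lemma smul_one_sub_psd {k : ℕ} {A : Matrix (Fin k) (Fin k) ℂ}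
    (hA : A.PosSemidef) : (A.trace • (1 : Matrix (Fin k) (Fin k) ℂ) - A).PosSemidef := by
  obtain ⟨U, d, hU1, hU1', hd, hspec⟩ := psd_decomp hA
  subst hspec
  rw [trace_decomp U d hU1']
  have key : ((∑ i, d i : ℝ) : ℂ) • (1 : Matrix (Fin k) (Fin k) ℂ)
      - U * diagonal (fun i => (d i : ℂ)) * star U
      = U * diagonal (fun i => ((∑ j, d j - d i : ℝ) : ℂ)) * star U := by
    have h1 : ((∑ i, d i : ℝ) : ℂ) • (1 : Matrix (Fin k) (Fin k) ℂ)
        = U * (((∑ i, d i : ℝ) : ℂ) • (1 : Matrix (Fin k) (Fin k) ℂ)) * star U := by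
      rw [Matrix.mul_smul, Matrix.smul_mul, mul_one, hU1]
    rw [h1, ← Matrix.sub_mul, ← Matrix.mul_sub, smul_one_eq_diagonal, diagonal_sub]
    congr 1
    congr 1
    funext i
    push_cast
    ring
  rw [key]
  refine PosSemidef.mul_mul_conjTranspose_same ?_ U
  refine posSemidef_diagonal_iff.mpr fun i => ?_
  rw [Complex.zero_le_real]
  exact sub_nonneg.mpr (Finset.single_le_sum (fun j _ => hd j) (Finset.mem_univ i))

private lemma rank_one_of_sq {k : ℕ} {A : Matrix (Fin k) (Fin k) ℂ} (hA : A.PosSemidef)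
    (h0 : A ≠ 0) {a : ℝ} (ha : 0 < a) (htr : A.trace = (a : ℂ))
    (hsq : A * A = (a : ℂ) • A) :
    ∃ x : Fin k → ℂ, x ≠ 0 ∧ A = vecMulVec x (star x) := by
  obtain ⟨U, d, hU1, hU1', hd, hspec⟩ := psd_decomp hA
  subst hspec
  set D := diagonal (fun i => (d i : ℂ)) with hD
  have cancel : ∀ M : Matrix (Fin k) (Fin k) ℂ, star U * (U * M * star U) * U = M := by
    intro M
    calc star U * (U * M * star U) * U = (star U * U) * M * (star U * U) := by
          simp only [mul_assoc]
      _ = M := by rw [hU1', one_mul, mul_one]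
  have hDD : D * D = (a : ℂ) • D := by
    have h1 : U * (D * D) * star U = U * ((a : ℂ) • D) * star U := by
      calc U * (D * D) * star U
          = (U * D * star U) * (U * D * star U) := by
            rw [show (U * D * star U) * (U * D * star U)
                = U * (D * ((star U * U) * (D * star U))) from by simp only [mul_assoc],
              hU1', one_mul]
            simp only [mul_assoc]
        _ = (a : ℂ) • (U * D * star U) := hsq
        _ = U * ((a : ℂ) • D) * star U := by rw [Matrix.mul_smul, Matrix.smul_mul]
    have h2 := congrArg (fun M => star U * M * U) h1
    simpa only [cancel] using h2
  have hdval : ∀ i, d i = 0 ∨ d i = a := by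
    intro i
    have h3 := congrFun (congrFun hDD i) i
    rw [hD] at h3
    simp only [diagonal_mul_diagonal, Matrix.smul_apply, diagonal_apply_eq, smul_eq_mul] at h3
    have h4 : d i * d i = a * d i := by exact_mod_cast h3
    rcases mul_eq_zero.mp (show (d i - a) * d i = 0 from by ring_nf; linarith [h4]) with h | h
    · right; linarith
    · left; exact h
  have hsum : ∑ i, d i = a := by
    have := trace_decomp U d hU1'
    rw [htr] at this
    exact_mod_cast this.symm
  have hcard : (Finset.univ.filter (fun i => d i = a)).card = 1 := by
    have hsplit := Finset.sum_filter_add_sum_filter_not Finset.univ (fun i => d i = a) d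
    have hz : ∑ i ∈ Finset.univ.filter (fun i => ¬ d i = a), d i = 0 :=
      Finset.sum_eq_zero fun i hi => by
        rcases hdval i with h | h
        · exact h
        · exact absurd h (Finset.mem_filter.mp hi).2
    have hfa : ∑ i ∈ Finset.univ.filter (fun i => d i = a), d i
        = (Finset.univ.filter (fun i => d i = a)).card * a :=
      Finset.sum_congr rfl (fun i hi => (Finset.mem_filter.mp hi).2) |>.trans (by
        rw [Finset.sum_const, nsmul_eq_mul])
    have : ((Finset.univ.filter (fun i => d i = a)).card : ℝ) * a = a := by
      rw [← hfa]; rw [hz, add_zero] at hsplit; rw [hsplit, hsum]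
    have h5 : ((Finset.univ.filter (fun i => d i = a)).card : ℝ) = 1 :=
      mul_right_cancel₀ (ne_of_gt ha) (by rw [this, one_mul])
    exact_mod_cast h5
  obtain ⟨i₀, hi₀⟩ := Finset.card_eq_one.mp hcard
  have hd_eq : ∀ i, d i = if i = i₀ then a else 0 := by
    intro i
    by_cases hii : i = i₀
    · subst hii
      simp only [if_pos rfl]
      have : i ∈ Finset.univ.filter (fun j => d j = a) := hi₀ ▸ Finset.mem_singleton_self i
      exact (Finset.mem_filter.mp this).2
    · simp only [if_neg hii]
      rcases hdval i with h | h
      · exact h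
      · exfalso
        apply hii
        have : i ∈ Finset.univ.filter (fun j => d j = a) :=
          Finset.mem_filter.mpr ⟨Finset.mem_univ i, h⟩
        rw [hi₀] at this
        exact Finset.mem_singleton.mp this
  refine ⟨fun j => (Real.sqrt a : ℂ) * U j i₀, ?_, ?_⟩
  · intro hx
    apply h0
    ext j l
    have hj := congrFun hx j
    simp only [Pi.zero_apply] at hj
    have hUj : U j i₀ = 0 := by
      rcases mul_eq_zero.mp hj with h | h
      · exfalso
        exact Real.sqrt_ne_zero'.mpr ha (by exact_mod_cast h)
      · exact h
    rw [show (U * D * star U) j l = ∑ i, U j i * (d i : ℂ) * star (U l i) from by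
      rw [Matrix.mul_apply]
      simp only [Matrix.mul_diagonal, star_apply, hD, diagonal_apply_eq]]
    simp only [Matrix.zero_apply]
    refine Finset.sum_eq_zero fun i _ => ?_
    rw [hd_eq i]
    by_cases hii : i = i₀
    · subst hii; rw [hUj]; ring
    · simp [hii]
  · ext j l
    rw [show (U * D * star U) j l = ∑ i, U j i * (d i : ℂ) * star (U l i) from by
      rw [Matrix.mul_apply]
      simp only [Matrix.mul_diagonal, star_apply, hD, diagonal_apply_eq]]
    rw [vecMulVec_apply]
    have : ∀ i, U j i * (d i : ℂ) * star (U l i)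
        = if i = i₀ then U j i₀ * (a : ℂ) * star (U l i₀) else 0 := by
      intro i
      rw [hd_eq i]
      by_cases hii : i = i₀
      · subst hii; simp
      · simp [hii]
    rw [Finset.sum_congr rfl (fun i _ => this i), Finset.sum_ite_eq' Finset.univ i₀]
    simp only [Finset.mem_univ, if_pos, Pi.star_apply]
    have hsqa : ((Real.sqrt a : ℝ) : ℂ) * ((Real.sqrt a : ℝ) : ℂ) = (a : ℂ) := by
      rw [← Complex.ofReal_mul, Real.mul_self_sqrt ha.le]
    have hstar : star ((Real.sqrt a : ℝ) : ℂ) = ((Real.sqrt a : ℝ) : ℂ) := by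
      rw [Complex.star_def, Complex.conj_ofReal]
    rw [star_mul', hstar, ← hsqa]
    ring

/-- For nonzero Hermitian positive semidefinite matrices `X₁, X₂ ∈ ℂ^{n×n}`,
`tr(X₁X₂) = tr(X₁)·tr(X₂)` holds iff there exist a nonzero `x ∈ ℂⁿ` and a real
`α > 0` with `X₁ = x xᴴ` and `X₂ = α · x xᴴ` (equivalently: both are rank one
and proportional with a positive real ratio). -/
theorem trace_mul_eq_trace_mul_trace_iff_rank_one_proportional
    {n : ℕ} (X₁ X₂ : Matrix (Fin n) (Fin n) ℂ)
    (h₁ : X₁.PosSemidef) (h₂ : X₂.PosSemidef) (h₁0 : X₁ ≠ 0) (h₂0 : X₂ ≠ 0) :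
    (X₁ * X₂).trace = X₁.trace * X₂.trace ↔
      ∃ (x : Fin n → ℂ) (α : ℝ), x ≠ 0 ∧ 0 < α ∧
        X₁ = Matrix.vecMulVec x (star x) ∧
        X₂ = α • Matrix.vecMulVec x (star x) := by
  constructor
  · intro h
    obtain ⟨a, ha, hta⟩ := trace_pos_of_psd_ne_zero h₁ h₁0
    obtain ⟨b, hb, htb⟩ := trace_pos_of_psd_ne_zero h₂ h₂0
    have e1 : X₁ * (X₂.trace • 1 - X₂) = X₂.trace • X₁ - X₁ * X₂ := by
      rw [Matrix.mul_sub, mul_smul_comm, mul_one]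
    have t1 : (X₁ * (X₂.trace • 1 - X₂)).trace = 0 := by
      rw [e1, trace_sub, trace_smul, h, smul_eq_mul]
      ring
    have z1 : X₁ * (X₂.trace • 1 - X₂) = 0 :=
      mul_eq_zero_of_trace_mul_eq_zero h₁ (smul_one_sub_psd h₂) t1
    have m1 : X₁ * X₂ = X₂.trace • X₁ := by
      rw [e1] at z1
      exact (sub_eq_zero.mp z1).symm
    have e2 : X₂ * (X₁.trace • 1 - X₁) = X₁.trace • X₂ - X₂ * X₁ := by
      rw [Matrix.mul_sub, mul_smul_comm, mul_one]
    have t2 : (X₂ * (X₁.trace • 1 - X₁)).trace = 0 := by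
      rw [e2, trace_sub, trace_smul, trace_mul_comm, h, smul_eq_mul]
      ring
    have z2 : X₂ * (X₁.trace • 1 - X₁) = 0 :=
      mul_eq_zero_of_trace_mul_eq_zero h₂ (smul_one_sub_psd h₁) t2
    have m2 : X₂ * X₁ = X₁.trace • X₂ := by
      rw [e2] at z2
      exact (sub_eq_zero.mp z2).symm
    -- proportionality
    have m3 : X₁.trace • X₂ = X₂.trace • X₁ := by
      have hct := congrArg conjTranspose m1
      rw [conjTranspose_mul, h₁.1.eq, h₂.1.eq, conjTranspose_smul, h₁.1.eq, m2, htb] at hct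
      rw [hct]
      congr 1
      rw [htb, Complex.star_def, Complex.conj_ofReal]
    have ha' : (a : ℂ) ≠ 0 := by
      exact_mod_cast Complex.ofReal_ne_zero.mpr ha.ne'
    have hX2 : X₂ = ((b / a : ℝ) : ℂ) • X₁ := by
      rw [hta, htb] at m3
      calc X₂ = ((a : ℂ)⁻¹ * (a : ℂ)) • X₂ := by rw [inv_mul_cancel₀ ha', one_smul]
        _ = (a : ℂ)⁻¹ • ((a : ℂ) • X₂) := by rw [mul_smul]
        _ = (a : ℂ)⁻¹ • ((b : ℂ) • X₁) := by rw [m3]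
        _ = ((b / a : ℝ) : ℂ) • X₁ := by
            rw [smul_smul]
            congr 1
            push_cast
            ring
    have hba : ((b / a : ℝ) : ℂ) ≠ 0 := by
      exact_mod_cast Complex.ofReal_ne_zero.mpr (div_pos hb ha).ne'
    have m4 : X₁ * X₁ = (a : ℂ) • X₁ := by
      have h5 : ((b / a : ℝ) : ℂ) • (X₁ * X₁) = (b : ℂ) • X₁ := by
        rw [← mul_smul_comm, ← hX2, m1, htb]
      calc X₁ * X₁ = (((b / a : ℝ) : ℂ)⁻¹ * ((b / a : ℝ) : ℂ)) • (X₁ * X₁) := by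
            rw [inv_mul_cancel₀ hba, one_smul]
        _ = ((b / a : ℝ) : ℂ)⁻¹ • (((b / a : ℝ) : ℂ) • (X₁ * X₁)) := by rw [mul_smul]
        _ = ((b / a : ℝ) : ℂ)⁻¹ • ((b : ℂ) • X₁) := by rw [h5]
        _ = (a : ℂ) • X₁ := by
            rw [smul_smul]
            congr 1
            push_cast
            field_simp
    obtain ⟨x, hx, hX1⟩ := rank_one_of_sq h₁ h₁0 ha hta m4
    refine ⟨x, b / a, hx, div_pos hb ha, hX1, ?_⟩
    rw [hX2, hX1]
    ext i j
    simp only [Matrix.smul_apply, Complex.real_smul, smul_eq_mul]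
  · rintro ⟨x, α, hx, hα, rfl, rfl⟩
    have hM : ∀ (M : Matrix (Fin n) (Fin n) ℂ), M * (α • M) = α • (M * M) :=
      fun M => mul_smul_comm α M M
    rw [hM, trace_smul, trace_smul]
    have key : (vecMulVec x (star x) * vecMulVec x (star x)).trace
        = (vecMulVec x (star x)).trace * (vecMulVec x (star x)).trace := by
      simp only [Matrix.trace, Matrix.diag, Matrix.mul_apply, vecMulVec_apply, Pi.star_apply]
      rw [Finset.sum_mul_sum]
      rw [Finset.sum_comm]
      refine Finset.sum_congr rfl fun i _ => Finset.sum_congr rfl fun j _ => by ring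
    rw [key]
    simp only [smul_eq_mul, Complex.real_smul]
    ring
end

section
/- Suppose (X₁⋆, X₂⋆, t₁⋆, t₂⋆) is an optimal point of Problem (10). Then X₁⋆ = X₂⋆ and t₁⋆ = t₂⋆, and the pair (X, t) = (X₁⋆, t₁⋆) is an optimal point of Problem (8); in particular X₁⋆ has rank one. -/
open Matrix ComplexOrder

/-- The index set `{1,…,J}×{1,…,M}×{1,…,N}` of `ℂⁿ` with `n = N·M·J`. -/
abbrev SCMAIdx (J M N : ℕ) := Fin J × Fin M × Fin N

/-- The power-constraint matrix `B_j = diag(e_j^{(J)}) ⊗ I_{NM}`: the diagonal 0/1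
matrix that is the orthogonal projection onto the coordinates whose first index is `j`. -/
def SCMAB (J M N : ℕ) (j : Fin J) : Matrix (SCMAIdx J M N) (SCMAIdx J M N) ℂ :=
  Matrix.diagonal fun p => if p.1 = j then 1 else 0

/-- Feasibility for Problem (8): `X` Hermitian PSD of rank one, `Re tr(A_i X) ≥ t`
for all `i`, and `tr(B_j X) = M·P` for all `j`. -/
def Feasible8 {J M N : ℕ} {ι : Type*}
    (A : ι → Matrix (SCMAIdx J M N) (SCMAIdx J M N) ℂ) (P : ℝ)
    (X : Matrix (SCMAIdx J M N) (SCMAIdx J M N) ℂ) (t : ℝ) : Prop :=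
  X.PosSemidef ∧ X.rank = 1 ∧ (∀ i, t ≤ ((A i * X).trace).re) ∧
    ∀ j : Fin J, (SCMAB J M N j * X).trace = (M : ℂ) * (P : ℂ)

/-- Optimality for the maximization Problem (8). -/
def Optimal8 {J M N : ℕ} {ι : Type*}
    (A : ι → Matrix (SCMAIdx J M N) (SCMAIdx J M N) ℂ) (P : ℝ)
    (X : Matrix (SCMAIdx J M N) (SCMAIdx J M N) ℂ) (t : ℝ) : Prop :=
  Feasible8 A P X t ∧ ∀ X' t', Feasible8 A P X' t' → t' ≤ t

/-- Feasibility for Problem (10): `X₁, X₂` Hermitian PSD, `Re tr(A_i X₁) ≥ t₁`,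
`Re tr(A_i X₂) ≥ t₂` for all `i`, `tr(B_j X₁) = tr(B_j X₂) = M·P` for all `j`, and
`tr(X₁X₂) = tr(X₁)·tr(X₂)`. -/
def Feasible10 {J M N : ℕ} {ι : Type*}
    (A : ι → Matrix (SCMAIdx J M N) (SCMAIdx J M N) ℂ) (P : ℝ)
    (X₁ X₂ : Matrix (SCMAIdx J M N) (SCMAIdx J M N) ℂ) (t₁ t₂ : ℝ) : Prop :=
  X₁.PosSemidef ∧ X₂.PosSemidef ∧
    (∀ i, t₁ ≤ ((A i * X₁).trace).re) ∧ (∀ i, t₂ ≤ ((A i * X₂).trace).re) ∧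
    (∀ j : Fin J, (SCMAB J M N j * X₁).trace = (M : ℂ) * (P : ℂ)) ∧
    (∀ j : Fin J, (SCMAB J M N j * X₂).trace = (M : ℂ) * (P : ℂ)) ∧
    (X₁ * X₂).trace = X₁.trace * X₂.trace

/-- Optimality for the maximization Problem (10) (objective `t₁ + t₂`). -/
def Optimal10 {J M N : ℕ} {ι : Type*}
    (A : ι → Matrix (SCMAIdx J M N) (SCMAIdx J M N) ℂ) (P : ℝ)
    (X₁ X₂ : Matrix (SCMAIdx J M N) (SCMAIdx J M N) ℂ) (t₁ t₂ : ℝ) : Prop :=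
  Feasible10 A P X₁ X₂ t₁ t₂ ∧
    ∀ X₁' X₂' t₁' t₂', Feasible10 A P X₁' X₂' t₁' t₂' → t₁' + t₂' ≤ t₁ + t₂

section Aux

section Aux

variable {n : Type*} [Fintype n] [DecidableEq n]

lemma aux_star_mul_self {X : Matrix n n ℂ} (hX : X.IsHermitian) :
    star (hX.eigenvectorUnitary : Matrix n n ℂ) * (hX.eigenvectorUnitary : Matrix n n ℂ) = 1 :=
  (Matrix.mem_unitaryGroup_iff').mp hX.eigenvectorUnitary.2

lemma aux_mul_star_self {X : Matrix n n ℂ} (hX : X.IsHermitian) :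
    (hX.eigenvectorUnitary : Matrix n n ℂ) * star (hX.eigenvectorUnitary : Matrix n n ℂ) = 1 :=
  (Matrix.mem_unitaryGroup_iff).mp hX.eigenvectorUnitary.2

lemma aux_trace_eq_sum_eig {X : Matrix n n ℂ} (hX : X.IsHermitian) :
    X.trace = ((∑ i, hX.eigenvalues i : ℝ) : ℂ) := by
  conv_lhs => rw [hX.spectral_theorem, Unitary.conjStarAlgAut_apply]
  rw [trace_mul_cycle, aux_star_mul_self hX, one_mul, trace_diagonal]
  push_cast
  rfl

lemma aux_trace_sq_eq_sum_eig_sq {X : Matrix n n ℂ} (hX : X.IsHermitian) :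
    (X * X).trace = ((∑ i, (hX.eigenvalues i) ^ 2 : ℝ) : ℂ) := by
  have h : star (hX.eigenvectorUnitary : Matrix n n ℂ) * X * (hX.eigenvectorUnitary : Matrix n n ℂ) =
      Matrix.diagonal (RCLike.ofReal ∘ hX.eigenvalues) := by
    have := hX.conjStarAlgAut_star_eigenvectorUnitary
    rw [Unitary.conjStarAlgAut_star_apply] at this
    exact this
  have hDD : Matrix.diagonal (RCLike.ofReal ∘ hX.eigenvalues) *
      Matrix.diagonal (RCLike.ofReal ∘ hX.eigenvalues) =
      (star (hX.eigenvectorUnitary : Matrix n n ℂ)) * (X * X) *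
        (hX.eigenvectorUnitary : Matrix n n ℂ) := by
    rw [← h]
    have hU : (hX.eigenvectorUnitary : Matrix n n ℂ) *
        (star (hX.eigenvectorUnitary : Matrix n n ℂ)) = 1 :=
      aux_mul_star_self hX
    calc (star (hX.eigenvectorUnitary : Matrix n n ℂ) * X * hX.eigenvectorUnitary) *
          (star (hX.eigenvectorUnitary : Matrix n n ℂ) * X * hX.eigenvectorUnitary)
        = star (hX.eigenvectorUnitary : Matrix n n ℂ) * X *
            ((hX.eigenvectorUnitary : Matrix n n ℂ) *
              star (hX.eigenvectorUnitary : Matrix n n ℂ)) * X *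
            (hX.eigenvectorUnitary : Matrix n n ℂ) := by
          simp only [Matrix.mul_assoc]
      _ = _ := by rw [hU]; simp only [Matrix.mul_assoc, Matrix.one_mul]
  have := congrArg Matrix.trace hDD
  rw [Matrix.diagonal_mul_diagonal, Matrix.trace_diagonal] at this
  rw [trace_mul_cycle, aux_mul_star_self hX, one_mul] at this
  rw [← this]
  push_cast
  simp [pow_two]

lemma aux_sum_sq_le {f : n → ℝ} (hf : ∀ i, 0 ≤ f i) :
    ∑ i, (f i) ^ 2 ≤ (∑ i, f i) ^ 2 := by
  rw [pow_two, Finset.sum_mul]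
  refine Finset.sum_le_sum fun i _ => ?_
  rw [pow_two]
  exact mul_le_mul_of_nonneg_right
    (Finset.single_le_sum (fun j _ => hf j) (Finset.mem_univ i)) (hf i)
    |>.trans_eq (by ring)

lemma aux_card_one {f : n → ℝ} (hf : ∀ i, 0 ≤ f i)
    (heq : ∑ i, (f i) ^ 2 = (∑ i, f i) ^ 2) (hpos : 0 < ∑ i, f i) :
    Fintype.card {i // f i ≠ 0} = 1 := by
  set S := ∑ i, f i with hS
  have hnn : ∀ i ∈ Finset.univ, 0 ≤ f i * (S - f i) := by
    intro i _
    have h1 : f i ≤ S := Finset.single_le_sum (fun j _ => hf j) (Finset.mem_univ i)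
    have := hf i
    nlinarith
  have hsum0 : ∑ i, f i * (S - f i) = 0 := by
    calc ∑ i, f i * (S - f i) = ∑ i, (f i * S - f i ^ 2) :=
          Finset.sum_congr rfl fun i _ => by ring
      _ = (∑ i, f i) * S - ∑ i, f i ^ 2 := by
          rw [Finset.sum_sub_distrib, Finset.sum_mul]
      _ = 0 := by rw [heq, ← hS]; ring
  have hzero := (Finset.sum_eq_zero_iff_of_nonneg hnn).mp hsum0
  have hcases : ∀ i, f i = 0 ∨ f i = S := by
    intro i
    rcases mul_eq_zero.mp (hzero i (Finset.mem_univ i)) with h | h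
    · exact Or.inl h
    · exact Or.inr (by linarith)
  have hne : ∃ i, f i ≠ 0 := by
    by_contra h
    push_neg at h
    rw [hS] at hpos
    simp [Finset.sum_congr rfl fun i _ => h i] at hpos
  obtain ⟨i₀, hi₀⟩ := hne
  refine Fintype.card_eq_one_iff.mpr ⟨⟨i₀, hi₀⟩, ?_⟩
  rintro ⟨j, hj⟩
  ext
  by_contra hji
  have hfj : f j = S := (hcases j).resolve_left hj
  have hfi : f i₀ = S := (hcases i₀).resolve_left hi₀
  have hsub : ({j, i₀} : Finset n) ⊆ Finset.univ := Finset.subset_univ _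
  have : f j + f i₀ ≤ S := by
    calc f j + f i₀ = ∑ i ∈ ({j, i₀} : Finset n), f i := by
          rw [Finset.sum_pair hji]
      _ ≤ S := Finset.sum_le_sum_of_subset_of_nonneg hsub fun i _ _ => hf i
  rw [hfj, hfi] at this
  linarith

lemma aux_rank_one_trace_sq {X : Matrix n n ℂ} (hX : X.PosSemidef) (hr : X.rank = 1) :
    (X * X).trace = X.trace * X.trace := by
  have hcard : Fintype.card {i // hX.1.eigenvalues i ≠ 0} = 1 := by
    rw [← hX.1.rank_eq_card_non_zero_eigs, hr]
  obtain ⟨⟨i₀, hi₀⟩, huniq⟩ := Fintype.card_eq_one_iff.mp hcard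
  have hall : ∀ j, j ≠ i₀ → hX.1.eigenvalues j = 0 := by
    intro j hj
    by_contra h
    exact hj (congrArg Subtype.val (huniq ⟨j, h⟩))
  have hsum : ∑ i, hX.1.eigenvalues i = hX.1.eigenvalues i₀ :=
    Finset.sum_eq_single i₀ (fun b _ hb => hall b hb) (fun h => absurd (Finset.mem_univ i₀) h)
  have hsumsq : ∑ i, (hX.1.eigenvalues i) ^ 2 = (hX.1.eigenvalues i₀) ^ 2 :=
    Finset.sum_eq_single i₀ (fun b _ hb => by rw [hall b hb]; ring)
      (fun h => absurd (Finset.mem_univ i₀) h)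
  rw [aux_trace_sq_eq_sum_eig_sq hX.1, aux_trace_eq_sum_eig hX.1, hsum, hsumsq]
  push_cast
  ring


lemma aux_key {n : Type*} [Fintype n] [DecidableEq n]
    {X Y : Matrix n n ℂ} (hX : X.PosSemidef) (hY : Y.PosSemidef) {c : ℝ}
    (hc : 0 < c) (hXt : X.trace = (c : ℂ)) (hYt : Y.trace = (c : ℂ))
    (h : (X * Y).trace = X.trace * Y.trace) : X = Y ∧ X.rank = 1 := by
  have hXs : ∑ i, hX.1.eigenvalues i = c := by
    have h' := aux_trace_eq_sum_eig hX.1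
    rw [hXt] at h'
    exact_mod_cast h'.symm
  have hYs : ∑ i, hY.1.eigenvalues i = c := by
    have h' := aux_trace_eq_sum_eig hY.1
    rw [hYt] at h'
    exact_mod_cast h'.symm
  have hXsq : ∑ i, (hX.1.eigenvalues i) ^ 2 ≤ c ^ 2 := by
    have := aux_sum_sq_le (f := hX.1.eigenvalues) (fun i => hX.eigenvalues_nonneg i)
    rwa [hXs] at this
  have hYsq : ∑ i, (hY.1.eigenvalues i) ^ 2 ≤ c ^ 2 := by
    have := aux_sum_sq_le (f := hY.1.eigenvalues) (fun i => hY.eigenvalues_nonneg i)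
    rwa [hYs] at this
  have hD : (X - Y).IsHermitian := hX.1.sub hY.1
  have hXY : (X * Y).trace = ((c : ℂ)) ^ 2 := by rw [h, hXt, hYt]; ring
  have hYX : (Y * X).trace = ((c : ℂ)) ^ 2 := by rw [trace_mul_comm, hXY]
  have hDtr : ((X - Y) * (X - Y)).trace
      = (X * X).trace + (Y * Y).trace - 2 * (c : ℂ) ^ 2 := by
    rw [sub_mul, mul_sub, mul_sub, trace_sub, trace_sub, trace_sub, hXY, hYX]
    ring
  rw [aux_trace_sq_eq_sum_eig_sq hX.1, aux_trace_sq_eq_sum_eig_sq hY.1,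
    aux_trace_sq_eq_sum_eig_sq hD] at hDtr
  have hreal : ∑ i, (hD.eigenvalues i) ^ 2
      = (∑ i, (hX.1.eigenvalues i) ^ 2) + (∑ i, (hY.1.eigenvalues i) ^ 2) - 2 * c ^ 2 := by
    exact_mod_cast hDtr
  have hDnn : 0 ≤ ∑ i, (hD.eigenvalues i) ^ 2 :=
    Finset.sum_nonneg fun i _ => sq_nonneg _
  have hDzero : ∑ i, (hD.eigenvalues i) ^ 2 = 0 := le_antisymm (by linarith) hDnn
  have hXc : ∑ i, (hX.1.eigenvalues i) ^ 2 = c ^ 2 := by linarith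
  have hDeig : ∀ i ∈ Finset.univ, (hD.eigenvalues i) ^ 2 = 0 :=
    (Finset.sum_eq_zero_iff_of_nonneg (fun i _ => sq_nonneg _)).mp hDzero
  have hDeq : X - Y = 0 := by
    have hev : ∀ i, hD.eigenvalues i = 0 := fun i =>
      pow_eq_zero_iff (n := 2) (by norm_num) |>.mp (hDeig i (Finset.mem_univ i))
    have hz : Matrix.diagonal (RCLike.ofReal ∘ hD.eigenvalues : n → ℂ) = 0 := by
      ext i j
      by_cases hij : i = j
      · subst hij; simp [Matrix.diagonal_apply_eq, hev i]
      · simp [Matrix.diagonal_apply_ne _ hij]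
    rw [hD.spectral_theorem, Unitary.conjStarAlgAut_apply, hz, Matrix.mul_zero, Matrix.zero_mul]
  constructor
  · exact sub_eq_zero.mp hDeq
  · rw [hX.1.rank_eq_card_non_zero_eigs]
    exact aux_card_one (fun i => hX.eigenvalues_nonneg i)
      (by rw [hXc, hXs]) (by rw [hXs]; exact hc)

lemma aux_trace_of_B {J M N : ℕ} {X : Matrix (SCMAIdx J M N) (SCMAIdx J M N) ℂ}
    {MP : ℂ} (hB : ∀ j : Fin J, (SCMAB J M N j * X).trace = MP) :
    X.trace = (J : ℂ) * MP := by
  have h1 : ∀ j : Fin J, (SCMAB J M N j * X).trace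
      = ∑ p : SCMAIdx J M N, if p.1 = j then X p p else 0 := by
    intro j
    unfold SCMAB
    simp [Matrix.trace, Matrix.diag, Matrix.diagonal_mul, ite_mul, one_mul, zero_mul,
      Matrix.mul_apply, Matrix.diagonal_apply]
  calc X.trace = ∑ p : SCMAIdx J M N, X p p := by simp [Matrix.trace, Matrix.diag]
    _ = ∑ p : SCMAIdx J M N, ∑ j : Fin J, (if p.1 = j then X p p else 0) := by
        refine Finset.sum_congr rfl fun p _ => ?_
        rw [Finset.sum_ite_eq Finset.univ p.1 fun _ => X p p, if_pos (Finset.mem_univ p.1)]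
    _ = ∑ j : Fin J, ∑ p : SCMAIdx J M N, (if p.1 = j then X p p else 0) := Finset.sum_comm
    _ = ∑ _j : Fin J, MP := Finset.sum_congr rfl fun j _ => by rw [← h1 j, hB j]
    _ = (J : ℂ) * MP := by simp [Finset.sum_const, nsmul_eq_mul]

end Aux

end Aux

/-- Theorem 1 (first direction): if `(X₁⋆, X₂⋆, t₁⋆, t₂⋆)` is an optimal point of
Problem (10), then `X₁⋆ = X₂⋆`, `t₁⋆ = t₂⋆`, `(X₁⋆, t₁⋆)` is an optimal point of
Problem (8), and in particular `X₁⋆` has rank one. -/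
theorem optimal10_implies_optimal8
    {J M N : ℕ} (hJ : 0 < J) (hM : 0 < M) (hN : 0 < N)
    {ι : Type*} [Fintype ι] [Nonempty ι]
    (A : ι → Matrix (SCMAIdx J M N) (SCMAIdx J M N) ℂ)
    (hA : ∀ i, (A i).IsHermitian)
    (P : ℝ) (hP : 0 < P)
    (X₁ X₂ : Matrix (SCMAIdx J M N) (SCMAIdx J M N) ℂ) (t₁ t₂ : ℝ)
    (hopt : Optimal10 A P X₁ X₂ t₁ t₂) :
    X₁ = X₂ ∧ t₁ = t₂ ∧ Optimal8 A P X₁ t₁ ∧ X₁.rank = 1 := by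
  obtain ⟨⟨hPS1, hPS2, hA1, hA2, hB1, hB2, htr⟩, hopt2⟩ := hopt
  have hc : (0 : ℝ) < (J : ℝ) * ((M : ℝ) * P) := by
    have : (0:ℝ) < (J:ℝ) := by exact_mod_cast hJ
    have : (0:ℝ) < (M:ℝ) := by exact_mod_cast hM
    positivity
  have h1t : X₁.trace = (((J : ℝ) * ((M : ℝ) * P) : ℝ) : ℂ) := by
    rw [aux_trace_of_B hB1]; push_cast; ring
  have h2t : X₂.trace = (((J : ℝ) * ((M : ℝ) * P) : ℝ) : ℂ) := by
    rw [aux_trace_of_B hB2]; push_cast; ring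
  obtain ⟨hXY, hrank⟩ := aux_key hPS1 hPS2 hc h1t h2t htr
  have hA2' : ∀ i, t₂ ≤ ((A i * X₁).trace).re := by rw [hXY]; exact hA2
  set s : ℝ := Finset.univ.inf' Finset.univ_nonempty (fun i => ((A i * X₁).trace).re) with hs
  have hs_le : ∀ i, s ≤ ((A i * X₁).trace).re := fun i =>
    Finset.inf'_le _ (Finset.mem_univ i)
  have ht₁s : t₁ ≤ s := Finset.le_inf' _ _ fun i _ => hA1 i
  have ht₂s : t₂ ≤ s := Finset.le_inf' _ _ fun i _ => hA2' i
  have hsq : (X₁ * X₁).trace = X₁.trace * X₁.trace := aux_rank_one_trace_sq hPS1 hrank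
  have hfeas10 : Feasible10 A P X₁ X₁ s s :=
    ⟨hPS1, hPS1, hs_le, hs_le, hB1, hB1, hsq⟩
  have h2s : s + s ≤ t₁ + t₂ := hopt2 _ _ _ _ hfeas10
  have ht1 : t₁ = s := by linarith
  have ht2 : t₂ = s := by linarith
  refine ⟨hXY, by rw [ht1, ht2], ⟨⟨hPS1, hrank, hA1, hB1⟩, ?_⟩, hrank⟩
  intro X' t' ⟨h'1, h'2, h'3, h'4⟩
  have h'sq : (X' * X').trace = X'.trace * X'.trace := aux_rank_one_trace_sq h'1 h'2
  have : Feasible10 A P X' X' t' t' := ⟨h'1, h'1, h'3, h'3, h'4, h'4, h'sq⟩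
  have := hopt2 X' X' t' t' this
  linarith
end

section
/- Suppose (X₁⋆, X₂⋆, t₁⋆, t₂⋆) is an optimal point of Problem (10). Then t₁⋆ = t₂⋆ = min_{i ∈ ι} Re tr(A_i X₁⋆). -/
open Matrix ComplexOrder

section Aux

variable {n : Type*} [Fintype n] [DecidableEq n]

lemma aux_star_mul_self_s6 (z : ℂ) : star z * z = ((Complex.normSq z : ℝ) : ℂ) := by
  rw [Complex.normSq_eq_conj_mul_self]; rfl

lemma aux_normSq_eq_norm_sq (z : ℂ) : Complex.normSq z = ‖z‖ ^ 2 := by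
  rw [Complex.normSq_eq_norm_sq]

/-- If `tr(Mᴴ M) = 0` then `M = 0`. -/
lemma aux_trace_conjTranspose_mul_self_eq_zero {m : Type*} [Fintype m]
    {M : Matrix m n ℂ} (h : (Mᴴ * M).trace = 0) : M = 0 := by
  have hre : (∑ j, ∑ i, Complex.normSq (M i j)) = 0 := by
    have : (Mᴴ * M).trace = ((∑ j, ∑ i, Complex.normSq (M i j) : ℝ) : ℂ) := by
      simp only [Matrix.trace, Matrix.diag, Matrix.mul_apply, Matrix.conjTranspose_apply,
        Complex.ofReal_sum]
      exact Finset.sum_congr rfl fun j _ => Finset.sum_congr rfl fun i _ =>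
        aux_star_mul_self_s6 (M i j)
    rw [this] at h
    exact_mod_cast h
  have hall : ∀ j ∈ Finset.univ, ∀ i ∈ (Finset.univ : Finset m),
      Complex.normSq (M i j) = 0 := by
    have h1 := (Finset.sum_eq_zero_iff_of_nonneg
      (fun j _ => Finset.sum_nonneg fun i _ => Complex.normSq_nonneg _)).mp hre
    intro j hj i hi
    exact (Finset.sum_eq_zero_iff_of_nonneg
      (fun i _ => Complex.normSq_nonneg _)).mp (h1 j hj) i hi
  ext i j
  simpa using Complex.normSq_eq_zero.mp (hall j (Finset.mem_univ _) i (Finset.mem_univ _))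

/-- If `X, Y` are PSD and `tr(XY) = 0` then `XY = 0`. -/
lemma aux_mul_eq_zero_of_trace_eq_zero {X Y : Matrix n n ℂ}
    (hX : X.PosSemidef) (hY : Y.PosSemidef) (h : (X * Y).trace = 0) : X * Y = 0 := by
  obtain ⟨C, rfl⟩ : ∃ C : Matrix n n ℂ, X = Cᴴ * C := by
    open scoped MatrixOrder in
    exact ⟨CFC.sqrt X, by rw [(CFC.sqrt_nonneg X).posSemidef.1.eq, CFC.sqrt_mul_sqrt_self X hX.nonneg]⟩
  obtain ⟨D, rfl⟩ : ∃ D : Matrix n n ℂ, Y = Dᴴ * D := by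
    open scoped MatrixOrder in
    exact ⟨CFC.sqrt Y, by rw [(CFC.sqrt_nonneg Y).posSemidef.1.eq, CFC.sqrt_mul_sqrt_self Y hY.nonneg]⟩
  have htr : ((C * Dᴴ)ᴴ * (C * Dᴴ)).trace = 0 := by
    have hrw : (C * Dᴴ)ᴴ * (C * Dᴴ) = D * ((Cᴴ * C) * Dᴴ) := by
      rw [Matrix.conjTranspose_mul, Matrix.conjTranspose_conjTranspose]
      rw [Matrix.mul_assoc, Matrix.mul_assoc]
    rw [hrw, Matrix.trace_mul_comm, Matrix.mul_assoc, h]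
  have h0 : C * Dᴴ = 0 := aux_trace_conjTranspose_mul_self_eq_zero htr
  calc Cᴴ * C * (Dᴴ * D) = Cᴴ * ((C * Dᴴ) * D) := by
        rw [Matrix.mul_assoc, Matrix.mul_assoc]
    _ = 0 := by rw [h0, Matrix.zero_mul, Matrix.mul_zero]

/-- For PSD `X`, the matrix `tr(X) • 1 - X` is PSD. -/
lemma aux_psd_trace_smul_one_sub {X : Matrix n n ℂ} (hX : X.PosSemidef) :
    (X.trace • (1 : Matrix n n ℂ) - X).PosSemidef := by
  obtain ⟨C, rfl⟩ : ∃ C : Matrix n n ℂ, X = Cᴴ * C := by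
    open scoped MatrixOrder in
    exact ⟨CFC.sqrt X, by rw [(CFC.sqrt_nonneg X).posSemidef.1.eq, CFC.sqrt_mul_sqrt_self X hX.nonneg]⟩
  have htr : (Cᴴ * C).trace = ((∑ j, ∑ i, Complex.normSq (C i j) : ℝ) : ℂ) := by
    simp only [Matrix.trace, Matrix.diag, Matrix.mul_apply, Matrix.conjTranspose_apply,
      Complex.ofReal_sum]
    exact Finset.sum_congr rfl fun j _ => Finset.sum_congr rfl fun i _ =>
      aux_star_mul_self_s6 (C i j)
  refine Matrix.PosSemidef.of_dotProduct_mulVec_nonneg ?_ ?_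
  · have hXh : (Cᴴ * C).IsHermitian := (Matrix.posSemidef_conjTranspose_mul_self C).1
    unfold Matrix.IsHermitian
    rw [Matrix.conjTranspose_sub, Matrix.conjTranspose_smul, Matrix.conjTranspose_one, hXh]
    congr 1
    congr 1
    rw [htr]
    exact Complex.conj_ofReal _
  · intro v
    have hquad : star v ⬝ᵥ ((Cᴴ * C) *ᵥ v)
        = ((∑ i, Complex.normSq ((C *ᵥ v) i) : ℝ) : ℂ) := by
      rw [← Matrix.mulVec_mulVec, dotProduct_mulVec, ← Matrix.star_mulVec]
      simp only [dotProduct, Pi.star_apply, Complex.ofReal_sum]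
      exact Finset.sum_congr rfl fun i _ => aux_star_mul_self_s6 _
    have hvv : star v ⬝ᵥ v = ((∑ i, Complex.normSq (v i) : ℝ) : ℂ) := by
      simp only [dotProduct, Pi.star_apply, Complex.ofReal_sum]
      exact Finset.sum_congr rfl fun i _ => aux_star_mul_self_s6 _
    have key : (∑ i, Complex.normSq ((C *ᵥ v) i))
        ≤ (∑ j, ∑ i, Complex.normSq (C i j)) * ∑ i, Complex.normSq (v i) := by
      have hrow : ∀ i, Complex.normSq ((C *ᵥ v) i)
          ≤ (∑ j, Complex.normSq (C i j)) * ∑ j, Complex.normSq (v j) := by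
        intro i
        have h1 : ‖(C *ᵥ v) i‖ ≤ ∑ j, ‖C i j‖ * ‖v j‖ := by
          calc ‖(C *ᵥ v) i‖ = ‖∑ j, C i j * v j‖ := rfl
            _ ≤ ∑ j, ‖C i j * v j‖ := norm_sum_le _ _
            _ = ∑ j, ‖C i j‖ * ‖v j‖ := by simp [norm_mul]
        have h2 : (∑ j, ‖C i j‖ * ‖v j‖) ^ 2
            ≤ (∑ j, ‖C i j‖ ^ 2) * ∑ j, ‖v j‖ ^ 2 :=
          Finset.sum_mul_sq_le_sq_mul_sq _ _ _
        calc Complex.normSq ((C *ᵥ v) i) = ‖(C *ᵥ v) i‖ ^ 2 :=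
              aux_normSq_eq_norm_sq _
          _ ≤ (∑ j, ‖C i j‖ * ‖v j‖) ^ 2 := by
              apply pow_le_pow_left₀ (norm_nonneg _) h1
          _ ≤ (∑ j, ‖C i j‖ ^ 2) * ∑ j, ‖v j‖ ^ 2 := h2
          _ = (∑ j, Complex.normSq (C i j)) * ∑ j, Complex.normSq (v j) := by
              congr 1 <;> exact Finset.sum_congr rfl fun j _ =>
                (aux_normSq_eq_norm_sq _).symm
      calc (∑ i, Complex.normSq ((C *ᵥ v) i))
          ≤ ∑ i, (∑ j, Complex.normSq (C i j)) * ∑ j, Complex.normSq (v j) :=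
            Finset.sum_le_sum fun i _ => hrow i
        _ = (∑ i, ∑ j, Complex.normSq (C i j)) * ∑ j, Complex.normSq (v j) := by
            rw [Finset.sum_mul]
        _ = (∑ j, ∑ i, Complex.normSq (C i j)) * ∑ i, Complex.normSq (v i) := by
            rw [Finset.sum_comm]
    rw [Matrix.sub_mulVec, dotProduct_sub, Matrix.smul_mulVec,
      Matrix.one_mulVec, dotProduct_smul, hquad, hvv, htr, sub_nonneg,
      smul_eq_mul, ← Complex.ofReal_mul]
    exact_mod_cast key

/-- Key rigidity: PSD matrices with equal positive real traces and
`tr(XY) = tr(X)tr(Y)` are equal. -/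
lemma aux_eq_of_trace_mul_eq {X Y : Matrix n n ℂ} {c : ℝ}
    (hX : X.PosSemidef) (hY : Y.PosSemidef) (hc : c ≠ 0)
    (htX : X.trace = (c : ℂ)) (htY : Y.trace = (c : ℂ))
    (h : (X * Y).trace = (c : ℂ) * (c : ℂ)) : X = Y := by
  have hc' : (c : ℂ) ≠ 0 := by exact_mod_cast hc
  have hX1 : ((c : ℂ) • (1 : Matrix n n ℂ) - X).PosSemidef := by
    have := aux_psd_trace_smul_one_sub hX
    rwa [htX] at this
  have hY1 : ((c : ℂ) • (1 : Matrix n n ℂ) - Y).PosSemidef := by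
    have := aux_psd_trace_smul_one_sub hY
    rwa [htY] at this
  have e1 : ((c : ℂ) • (1 : Matrix n n ℂ) - X) * Y = 0 := by
    apply aux_mul_eq_zero_of_trace_eq_zero hX1 hY
    rw [Matrix.sub_mul, Matrix.smul_mul, Matrix.one_mul, Matrix.trace_sub,
      Matrix.trace_smul, h, htY, smul_eq_mul, sub_self]
  have e2 : ((c : ℂ) • (1 : Matrix n n ℂ) - Y) * X = 0 := by
    apply aux_mul_eq_zero_of_trace_eq_zero hY1 hX
    rw [Matrix.sub_mul, Matrix.smul_mul, Matrix.one_mul, Matrix.trace_sub,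
      Matrix.trace_smul, Matrix.trace_mul_comm, h, htX, smul_eq_mul, sub_self]
  have e1' : (c : ℂ) • Y = X * Y := by
    rw [Matrix.sub_mul, Matrix.smul_mul, Matrix.one_mul, sub_eq_zero] at e1
    exact e1
  have e2' : (c : ℂ) • X = Y * X := by
    rw [Matrix.sub_mul, Matrix.smul_mul, Matrix.one_mul, sub_eq_zero] at e2
    exact e2
  -- conjugate transpose of e1' gives c • Y = Y * X
  have e1'' : (c : ℂ) • Y = Y * X := by
    have h1 : ((c : ℂ) • Y)ᴴ = (X * Y)ᴴ := by rw [e1']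
    rw [Matrix.conjTranspose_smul, Matrix.conjTranspose_mul, hY.1, hX.1] at h1
    have hstar : star ((c : ℂ)) = (c : ℂ) := Complex.conj_ofReal c
    rwa [hstar] at h1
  have heq : (c : ℂ) • X = (c : ℂ) • Y := by rw [e2', ← e1'']
  calc X = (c : ℂ)⁻¹ • ((c : ℂ) • X) := (inv_smul_smul₀ hc' X).symm
    _ = (c : ℂ)⁻¹ • ((c : ℂ) • Y) := by rw [heq]
    _ = Y := inv_smul_smul₀ hc' Y

end Aux

/-- Summing the power constraints gives the total trace. -/
lemma aux_trace_from_constraints {J M N : ℕ}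
    {X : Matrix (SCMAIdx J M N) (SCMAIdx J M N) ℂ} {P : ℝ}
    (h : ∀ j : Fin J, (SCMAB J M N j * X).trace = (M : ℂ) * (P : ℂ)) :
    X.trace = (J : ℂ) * ((M : ℂ) * (P : ℂ)) := by
  have hsum : ∑ j : Fin J, (SCMAB J M N j * X).trace = X.trace := by
    simp only [SCMAB, Matrix.trace, Matrix.diag, Matrix.diagonal_mul]
    rw [Finset.sum_comm]
    refine Finset.sum_congr rfl fun p _ => ?_
    simp [Finset.sum_ite_eq]
  rw [← hsum]
  simp [h, Finset.sum_const, mul_assoc]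

/-- If `(X₁⋆, X₂⋆, t₁⋆, t₂⋆)` is an optimal point of Problem (10), then
`t₁⋆ = t₂⋆ = min_{i ∈ ι} Re tr(A_i X₁⋆)`. -/
theorem optimal10_t_eq_min
    {J M N : ℕ} (hJ : 0 < J) (hM : 0 < M) (hN : 0 < N)
    {ι : Type*} [Fintype ι] [Nonempty ι]
    (A : ι → Matrix (SCMAIdx J M N) (SCMAIdx J M N) ℂ)
    (hA : ∀ i, (A i).IsHermitian)
    (P : ℝ) (hP : 0 < P)
    (X₁ X₂ : Matrix (SCMAIdx J M N) (SCMAIdx J M N) ℂ) (t₁ t₂ : ℝ)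
    (hopt : Optimal10 A P X₁ X₂ t₁ t₂) :
    t₁ = t₂ ∧
      t₁ = Finset.univ.inf' Finset.univ_nonempty (fun i => ((A i * X₁).trace).re) := by
  obtain ⟨hfeas, hmax⟩ := hopt
  obtain ⟨hX₁, hX₂, hAt₁, hAt₂, hB₁, hB₂, htr⟩ := hfeas
  set m₁ : ℝ := Finset.univ.inf' Finset.univ_nonempty (fun i => ((A i * X₁).trace).re)
    with hm₁
  set m₂ : ℝ := Finset.univ.inf' Finset.univ_nonempty (fun i => ((A i * X₂).trace).re)
    with hm₂
  -- t₁ ≤ m₁, t₂ ≤ m₂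
  have ht₁m₁ : t₁ ≤ m₁ := Finset.le_inf' _ _ fun i _ => hAt₁ i
  have ht₂m₂ : t₂ ≤ m₂ := Finset.le_inf' _ _ fun i _ => hAt₂ i
  -- (X₁, X₂, m₁, m₂) is feasible, so m₁ + m₂ ≤ t₁ + t₂
  have hfeas' : Feasible10 A P X₁ X₂ m₁ m₂ :=
    ⟨hX₁, hX₂,
      fun i => Finset.inf'_le _ (Finset.mem_univ i),
      fun i => Finset.inf'_le _ (Finset.mem_univ i),
      hB₁, hB₂, htr⟩
  have hle := hmax X₁ X₂ m₁ m₂ hfeas'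
  have ht₁ : t₁ = m₁ := le_antisymm ht₁m₁ (by linarith)
  have ht₂ : t₂ = m₂ := le_antisymm ht₂m₂ (by linarith)
  -- X₁ = X₂
  have hc : (0 : ℝ) < (J : ℝ) * ((M : ℝ) * P) := by
    have hJ' : (0 : ℝ) < (J : ℝ) := by exact_mod_cast hJ
    have hM' : (0 : ℝ) < (M : ℝ) := by exact_mod_cast hM
    positivity
  have htX₁ : X₁.trace = (((J : ℝ) * ((M : ℝ) * P) : ℝ) : ℂ) := by
    rw [aux_trace_from_constraints hB₁]; push_cast; ring
  have htX₂ : X₂.trace = (((J : ℝ) * ((M : ℝ) * P) : ℝ) : ℂ) := by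
    rw [aux_trace_from_constraints hB₂]; push_cast; ring
  have hXeq : X₁ = X₂ := by
    refine aux_eq_of_trace_mul_eq hX₁ hX₂ (ne_of_gt hc) htX₁ htX₂ ?_
    rw [htr, htX₁, htX₂]
  have hm : m₁ = m₂ := by rw [hm₁, hm₂, hXeq]
  exact ⟨by rw [ht₁, ht₂, hm], ht₁⟩
end
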